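/- (Theorem 2, case s\mu < 1.) Let q \in (0,1), let \eta_0 > 0 and \eta_{-1} > 0, and set \eta_k := q^k \eta_0 for k \ge 1. Let s > 0, \mu > 0 with s\mu < 1, and let C_I > 0, C_X > 0. For \varepsilon \in (0,1) let K(\varepsilon) be the least natural number K with 2 C_X q^K \eta_0 \le \varepsilon, and define F_k := (\eta_k^{-s} + \eta_{k-1}^{-s}) \eta_{k-1}^{-1} and G_K := \sum_{k=0}^{K} F_k^{\mu/(\mu+1)} \eta_{k-1}. Then there exists a constant C > 0, independent of \varepsilon, such that for all \varepsilon \in (0,1): (2 C_I)^{1/\mu} G_{K(\varepsilon)}^{(\mu+1)/\mu} \varepsilon^{-1/\mu} + \sum_{k=0}^{K(\varepsilon)} F_k \eta_{k-1} \le C \varepsilon^{-1/\mu}. -/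

import Mathlib

open Finset

private lemma aux_geom_lt_one (x : ℝ) (hx0 : 0 ≤ x) (hx1 : x < 1) (n : ℕ) :
    ∑ j ∈ range n, x ^ j ≤ 1 / (1 - x) := by
  rw [geom_sum_eq hx1.ne n]
  have h1 : 0 < 1 - x := by linarith
  have h2 : (x ^ n - 1) / (x - 1) = (1 - x ^ n) / (1 - x) := by
    rw [div_eq_div_iff (by linarith) (by linarith)]; ring
  rw [h2]
  gcongr
  have := pow_nonneg hx0 n
  linarith

private lemma aux_geom_gt_one (x : ℝ) (hx1 : 1 < x) (n : ℕ) :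
    ∑ j ∈ range n, x ^ j ≤ x ^ n / (x - 1) := by
  rw [geom_sum_eq hx1.ne' n]
  gcongr
  · linarith

/-- Theorem 2, case sμ < 1: ε-cost bound of the multilevel stochastic collocation
method with geometric spatial tolerances. -/
theorem epsilon_cost_case_8
    (q η0 ηm s μ CI CX : ℝ)
    (hq0 : 0 < q) (hq1 : q < 1) (hη0 : 0 < η0) (hηm : 0 < ηm)
    (hs : 0 < s) (hμ : 0 < μ) (hsμ : s * μ < 1)
    (hCI : 0 < CI) (hCX : 0 < CX)
    (η : ℤ → ℝ)
    (hηneg : η (-1) = ηm)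
    (hηnat : ∀ k : ℕ, η (k : ℤ) = q ^ k * η0)
    (Kf : ℝ → ℕ)
    (hKf : ∀ ε : ℝ, 0 < ε → ε < 1 →
      IsLeast {K : ℕ | 2 * CX * q ^ K * η0 ≤ ε} (Kf ε))
    (F : ℕ → ℝ)
    (hF : ∀ k : ℕ,
      F k = (η (k : ℤ) ^ (-s) + η ((k : ℤ) - 1) ^ (-s)) * (η ((k : ℤ) - 1))⁻¹)
    (G : ℕ → ℝ)
    (hG : ∀ K : ℕ,
      G K = ∑ k ∈ range (K + 1), F k ^ (μ / (μ + 1)) * η ((k : ℤ) - 1)) :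
    ∃ C : ℝ, 0 < C ∧ ∀ ε : ℝ, 0 < ε → ε < 1 →
      (2 * CI) ^ (1 / μ) * G (Kf ε) ^ ((μ + 1) / μ) * ε ^ (-(1 / μ)) +
          ∑ k ∈ range (Kf ε + 1), F k * η ((k : ℤ) - 1) ≤
        C * ε ^ (-(1 / μ)) := by
  have hμ1 : (0:ℝ) < μ + 1 := by linarith
  set θ : ℝ := μ / (μ + 1) with hθdef
  have hθ0 : 0 < θ := div_pos hμ hμ1
  set δ : ℝ := 1 - (s + 1) * θ with hδdef
  have hδ0 : 0 < δ := by
    have h : δ = (1 - s * μ) / (μ + 1) := by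
      rw [hδdef, hθdef]; field_simp; ring
    rw [h]; exact div_pos (by linarith) hμ1
  -- basic rewrites for η
  have hprev : ∀ j : ℕ, η (((j + 1 : ℕ) : ℤ) - 1) = q ^ j * η0 := by
    intro j
    have h : ((j + 1 : ℕ) : ℤ) - 1 = ((j : ℕ) : ℤ) := by push_cast; ring
    rw [h, hηnat]
  have h0prev : η (((0 : ℕ) : ℤ) - 1) = ηm := by
    simpa using hηneg
  have hP : ∀ j : ℕ, (0:ℝ) < q ^ j * η0 := fun j => by positivity
  -- explicit formulas for F
  have hF0 : F 0 = (η0 ^ (-s) + ηm ^ (-s)) * ηm⁻¹ := by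
    have h := hF 0
    rw [h0prev] at h
    rw [h]
    have : η ((0:ℕ) : ℤ) = η0 := by rw [hηnat]; simp
    rw [this]
  have hFs : ∀ j : ℕ, F (j + 1) =
      ((q * (q ^ j * η0)) ^ (-s) + (q ^ j * η0) ^ (-s)) * (q ^ j * η0)⁻¹ := by
    intro j
    have h := hF (j + 1)
    rw [hprev j, hηnat (j + 1)] at h
    rw [h]
    ring_nf
  have hF0pos : 0 < F 0 := by
    rw [hF0]; positivity
  have hFspos : ∀ j : ℕ, 0 < F (j + 1) := by
    intro j; rw [hFs j]
    have h1 : (0:ℝ) < q * (q ^ j * η0) := by positivity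
    positivity
  have hFpos : ∀ k : ℕ, 0 < F k := by
    intro k; cases k with
    | zero => exact hF0pos
    | succ j => exact hFspos j
  -- bound on F (j+1)
  have hFle : ∀ j : ℕ, F (j + 1) ≤ 2 * (q * (q ^ j * η0)) ^ (-s) * (q ^ j * η0)⁻¹ := by
    intro j
    rw [hFs j]
    have hqP : (0:ℝ) < q * (q ^ j * η0) := by positivity
    have hle : (q ^ j * η0) ^ (-s) ≤ (q * (q ^ j * η0)) ^ (-s) := by
      apply Real.rpow_le_rpow_of_nonpos hqP _ (by linarith)
      nlinarith [hP j]
    have hinv : (0:ℝ) ≤ (q ^ j * η0)⁻¹ := by positivity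
    nlinarith [Real.rpow_nonneg hqP.le (-s)]
  -- key product formula
  have hqs : (0:ℝ) < q ^ (-s) := Real.rpow_pos_of_pos hq0 (-s)
  set r : ℝ := q ^ (-s) with hrdef
  have hr1 : 1 < r := Real.one_lt_rpow_of_pos_of_lt_one_of_neg hq0 hq1 (by linarith)
  set ρ : ℝ := q ^ δ with hρdef
  have hρ0 : 0 < ρ := Real.rpow_pos_of_pos hq0 δ
  have hρ1 : ρ < 1 := Real.rpow_lt_one hq0.le hq1 hδ0
  -- (q * P)^(-s) = q^(-s) * (q^j)^(-s) * η0^(-s) = r * r^j * η0^(-s)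
  have hsplit : ∀ j : ℕ, (q * (q ^ j * η0)) ^ (-s) = r * r ^ j * η0 ^ (-s) := by
    intro j
    rw [← mul_assoc, Real.mul_rpow (by positivity) hη0.le,
      Real.mul_rpow hq0.le (by positivity)]
    congr 1
    rw [hrdef, ← Real.rpow_natCast q j, ← Real.rpow_mul hq0.le,
      ← Real.rpow_natCast (q ^ (-s)) j, ← Real.rpow_mul hq0.le]
    ring_nf
  -- bound on the G-terms
  have hPpow : ∀ j : ℕ, (q ^ j * η0) ^ δ = ρ ^ j * η0 ^ δ := by
    intro j
    rw [Real.mul_rpow (by positivity) hη0.le]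
    congr 1
    rw [hρdef, ← Real.rpow_natCast q j, ← Real.rpow_mul hq0.le,
      ← Real.rpow_natCast (q ^ δ) j, ← Real.rpow_mul hq0.le]
    ring_nf
  set B : ℝ := (2 * q ^ (-s)) ^ θ * η0 ^ δ with hBdef
  have hB0 : 0 < B := by
    have := Real.rpow_pos_of_pos (show (0:ℝ) < 2 * q ^ (-s) by positivity) θ
    have := Real.rpow_pos_of_pos hη0 δ
    positivity
  have hterm : ∀ j : ℕ, F (j + 1) ^ θ * (q ^ j * η0) ≤ B * ρ ^ j := by
    intro j
    have hPj := hP j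
    have h1 : F (j + 1) ^ θ ≤ (2 * (q * (q ^ j * η0)) ^ (-s) * (q ^ j * η0)⁻¹) ^ θ :=
      Real.rpow_le_rpow (hFspos j).le (hFle j) hθ0.le
    have h2 : (2 * (q * (q ^ j * η0)) ^ (-s) * (q ^ j * η0)⁻¹) ^ θ * (q ^ j * η0)
        = B * ρ ^ j := by
      have hqP : (0:ℝ) < q * (q ^ j * η0) := by positivity
      have e1 : (q * (q ^ j * η0)) ^ (-s) = q ^ (-s) * (q ^ j * η0) ^ (-s) :=
        Real.mul_rpow hq0.le hPj.le
      have e2 : (q ^ j * η0)⁻¹ = (q ^ j * η0) ^ (-1 : ℝ) := by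
        rw [Real.rpow_neg_one]
      rw [e1, e2]
      have e3 : 2 * (q ^ (-s) * (q ^ j * η0) ^ (-s)) * (q ^ j * η0) ^ (-1:ℝ)
          = (2 * q ^ (-s)) * (q ^ j * η0) ^ (-(s+1)) := by
        rw [show (-(s+1) : ℝ) = -s + -1 by ring, Real.rpow_add hPj]
        ring
      rw [e3, Real.mul_rpow (by positivity) (Real.rpow_nonneg hPj.le _),
        ← Real.rpow_mul hPj.le]
      nth_rewrite 2 [show (q ^ j * η0) = (q ^ j * η0) ^ (1:ℝ) by rw [Real.rpow_one]]
      rw [mul_assoc, ← Real.rpow_add hPj, show (-(s+1)) * θ + 1 = δ by rw [hδdef]; ring,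
        hPpow j, hBdef]
      ring
    calc F (j + 1) ^ θ * (q ^ j * η0)
        ≤ (2 * (q * (q ^ j * η0)) ^ (-s) * (q ^ j * η0)⁻¹) ^ θ * (q ^ j * η0) := by
          exact mul_le_mul_of_nonneg_right h1 hPj.le
      _ = B * ρ ^ j := h2
  -- bound on the cost-terms
  have hcost : ∀ j : ℕ, F (j + 1) * (q ^ j * η0) ≤ 2 * r * η0 ^ (-s) * r ^ j := by
    intro j
    have hPj := hP j
    have h1 : F (j + 1) * (q ^ j * η0) ≤
        2 * (q * (q ^ j * η0)) ^ (-s) * (q ^ j * η0)⁻¹ * (q ^ j * η0) :=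
      mul_le_mul_of_nonneg_right (hFle j) hPj.le
    have h2 : 2 * (q * (q ^ j * η0)) ^ (-s) * (q ^ j * η0)⁻¹ * (q ^ j * η0)
        = 2 * r * η0 ^ (-s) * r ^ j := by
      rw [hsplit j]
      field_simp
    linarith [h1, h2.le]
  -- G is bounded
  set Gb : ℝ := B * (1 / (1 - ρ)) + F 0 ^ θ * ηm with hGbdef
  have hGb0 : 0 < Gb := by
    have h1 : 0 < 1 / (1 - ρ) := by
      apply div_pos one_pos; linarith
    have h2 : 0 < F 0 ^ θ := Real.rpow_pos_of_pos hF0pos θ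
    positivity
  have hGle : ∀ K : ℕ, G K ≤ Gb := by
    intro K
    rw [hG K, Finset.sum_range_succ']
    have h1 : ∑ j ∈ range K, F (j + 1) ^ θ * η (((j + 1 : ℕ) : ℤ) - 1)
        ≤ B * (1 / (1 - ρ)) := by
      calc ∑ j ∈ range K, F (j + 1) ^ θ * η (((j + 1 : ℕ) : ℤ) - 1)
          ≤ ∑ j ∈ range K, B * ρ ^ j := by
            apply Finset.sum_le_sum
            intro j _
            rw [hprev j]
            exact hterm j
        _ = B * ∑ j ∈ range K, ρ ^ j := by rw [Finset.mul_sum]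
        _ ≤ B * (1 / (1 - ρ)) := by
            apply mul_le_mul_of_nonneg_left _ hB0.le
            exact aux_geom_lt_one ρ hρ0.le hρ1 K
    rw [h0prev, hGbdef]
    push_cast at h1 ⊢
    exact add_le_add_left h1 _
  have hG0 : ∀ K : ℕ, 0 ≤ G K := by
    intro K
    rw [hG K]
    apply Finset.sum_nonneg
    intro k _
    have hF' : 0 ≤ F k ^ θ := Real.rpow_nonneg (hFpos k).le θ
    have hηk : 0 ≤ η ((k : ℤ) - 1) := by
      cases k with
      | zero => rw [h0prev]; exact hηm.le
      | succ j => rw [hprev j]; exact (hP j).le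
    positivity
  -- the lower bound on q ^ (Kf ε)
  set m : ℝ := q * min 1 (1 / (2 * CX * η0)) with hmdef
  have hm0 : 0 < m := by
    have : (0:ℝ) < min 1 (1 / (2 * CX * η0)) := by
      apply lt_min one_pos; positivity
    positivity
  have hm1 : m ≤ q := by
    rw [hmdef]
    nth_rewrite 2 [show q = q * 1 by ring]
    exact mul_le_mul_of_nonneg_left (min_le_left _ _) hq0.le
  have hqK : ∀ ε : ℝ, 0 < ε → ε < 1 → m * ε ≤ q ^ (Kf ε) := by
    intro ε hε hε1
    obtain ⟨hmem, hlb⟩ := hKf ε hε hε1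
    cases hK : Kf ε with
    | zero =>
      have : m * ε ≤ q * 1 := by
        apply mul_le_mul hm1 hε1.le hε.le hq0.le
      simpa using this.trans (by linarith)
    | succ n =>
      have hn : ¬ (2 * CX * q ^ n * η0 ≤ ε) := by
        intro hcon
        have := hlb hcon
        omega
      push_neg at hn
      have h1 : ε / (2 * CX * η0) < q ^ n := by
        rw [div_lt_iff₀ (by positivity)]
        nlinarith
      have h2 : m * ε ≤ q * (ε / (2 * CX * η0)) := by
        rw [hmdef]
        have : min 1 (1 / (2 * CX * η0)) * ε ≤ ε / (2 * CX * η0) := by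
          have := min_le_right (1:ℝ) (1 / (2 * CX * η0))
          calc min 1 (1 / (2 * CX * η0)) * ε ≤ (1 / (2 * CX * η0)) * ε :=
                mul_le_mul_of_nonneg_right this hε.le
            _ = ε / (2 * CX * η0) := by ring
        calc q * min 1 (1 / (2 * CX * η0)) * ε = q * (min 1 (1 / (2 * CX * η0)) * ε) := by
              ring
          _ ≤ q * (ε / (2 * CX * η0)) := mul_le_mul_of_nonneg_left this hq0.le
      calc m * ε ≤ q * (ε / (2 * CX * η0)) := h2
        _ ≤ q * q ^ n := mul_le_mul_of_nonneg_left h1.le hq0.le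
        _ = q ^ (n + 1) := by ring
  -- r ^ K bound
  have hrK : ∀ ε : ℝ, 0 < ε → ε < 1 → r ^ (Kf ε) ≤ m ^ (-s) * ε ^ (-(1/μ)) := by
    intro ε hε hε1
    have h1 : r ^ (Kf ε) = (q ^ (Kf ε)) ^ (-s) := by
      rw [hrdef, ← Real.rpow_natCast (q ^ (-s)) (Kf ε), ← Real.rpow_mul hq0.le,
        ← Real.rpow_natCast q (Kf ε), ← Real.rpow_mul hq0.le, mul_comm]
    have h2 : (q ^ (Kf ε)) ^ (-s) ≤ (m * ε) ^ (-s) :=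
      Real.rpow_le_rpow_of_nonpos (by positivity) (hqK ε hε hε1) (by linarith)
    have h3 : (m * ε) ^ (-s) = m ^ (-s) * ε ^ (-s) := Real.mul_rpow hm0.le hε.le
    have h4 : ε ^ (-s) ≤ ε ^ (-(1/μ)) := by
      apply Real.rpow_le_rpow_of_exponent_ge hε hε1.le
      have : s ≤ 1 / μ := by
        rw [le_div_iff₀ hμ]; linarith
      linarith
    have h5 : 0 ≤ m ^ (-s) := Real.rpow_nonneg hm0.le _
    calc r ^ (Kf ε) = (q ^ (Kf ε)) ^ (-s) := h1
      _ ≤ (m * ε) ^ (-s) := h2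
      _ = m ^ (-s) * ε ^ (-s) := h3
      _ ≤ m ^ (-s) * ε ^ (-(1/μ)) := mul_le_mul_of_nonneg_left h4 h5
  -- constants
  set C1 : ℝ := (2 * CI) ^ (1/μ) * Gb ^ ((μ + 1)/μ) with hC1def
  have hC10 : 0 < C1 := by
    have h1 := Real.rpow_pos_of_pos (show (0:ℝ) < 2 * CI by linarith) (1/μ)
    have h2 := Real.rpow_pos_of_pos hGb0 ((μ + 1)/μ)
    positivity
  set C2 : ℝ := 2 * r * η0 ^ (-s) * (m ^ (-s) / (r - 1)) with hC2def
  have hC20 : 0 < C2 := by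
    have h1 := Real.rpow_pos_of_pos hη0 (-s)
    have h2 := Real.rpow_pos_of_pos hm0 (-s)
    have h3 : 0 < r - 1 := by linarith
    positivity
  set C3 : ℝ := F 0 * ηm with hC3def
  have hC30 : 0 < C3 := by positivity
  refine ⟨C1 + C2 + C3, by positivity, ?_⟩
  intro ε hε hε1
  set K := Kf ε with hKdef
  have hE1 : 1 ≤ ε ^ (-(1/μ)) := by
    have h := Real.rpow_le_rpow_of_exponent_ge hε hε1.le
      (show -(1/μ) ≤ (0:ℝ) by rw [neg_nonpos]; positivity)
    simpa using h
  have hE0 : 0 < ε ^ (-(1/μ)) := Real.rpow_pos_of_pos hε _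
  -- first term
  have hT1 : (2 * CI) ^ (1/μ) * G K ^ ((μ + 1)/μ) * ε ^ (-(1/μ)) ≤ C1 * ε ^ (-(1/μ)) := by
    rw [hC1def]
    have h1 : G K ^ ((μ + 1)/μ) ≤ Gb ^ ((μ + 1)/μ) :=
      Real.rpow_le_rpow (hG0 K) (hGle K) (by positivity)
    have h2 : 0 ≤ (2 * CI) ^ (1/μ) := Real.rpow_nonneg (by linarith) _
    have := mul_le_mul_of_nonneg_left h1 h2
    exact mul_le_mul_of_nonneg_right this hE0.le
  -- second term
  have hT2 : ∑ k ∈ range (K + 1), F k * η ((k : ℤ) - 1) ≤ C2 * ε ^ (-(1/μ)) + C3 := by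
    rw [Finset.sum_range_succ']
    have h1 : ∑ j ∈ range K, F (j + 1) * η (((j + 1 : ℕ) : ℤ) - 1)
        ≤ 2 * r * η0 ^ (-s) * (r ^ K / (r - 1)) := by
      calc ∑ j ∈ range K, F (j + 1) * η (((j + 1 : ℕ) : ℤ) - 1)
          ≤ ∑ j ∈ range K, 2 * r * η0 ^ (-s) * r ^ j := by
            apply Finset.sum_le_sum
            intro j _
            rw [hprev j]
            exact hcost j
        _ = 2 * r * η0 ^ (-s) * ∑ j ∈ range K, r ^ j := by rw [Finset.mul_sum]
        _ ≤ 2 * r * η0 ^ (-s) * (r ^ K / (r - 1)) := by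
            apply mul_le_mul_of_nonneg_left (aux_geom_gt_one r hr1 K)
            have := Real.rpow_nonneg hη0.le (-s)
            positivity
    have h2 : 2 * r * η0 ^ (-s) * (r ^ K / (r - 1)) ≤ C2 * ε ^ (-(1/μ)) := by
      rw [hC2def]
      have hc : (0:ℝ) ≤ 2 * r * η0 ^ (-s) := by
        have := Real.rpow_nonneg hη0.le (-s); positivity
      have hnum : r ^ K / (r - 1) ≤ m ^ (-s) * ε ^ (-(1/μ)) / (r - 1) := by
        gcongr
        · exact hrK ε hε hε1
      calc 2 * r * η0 ^ (-s) * (r ^ K / (r - 1))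
          ≤ 2 * r * η0 ^ (-s) * (m ^ (-s) * ε ^ (-(1/μ)) / (r - 1)) :=
            mul_le_mul_of_nonneg_left hnum hc
        _ = 2 * r * η0 ^ (-s) * (m ^ (-s) / (r - 1)) * ε ^ (-(1/μ)) := by ring
    rw [h0prev, hC3def]
    push_cast at h1 ⊢
    linarith
  have hC3E : C3 ≤ C3 * ε ^ (-(1/μ)) := by
    nth_rewrite 1 [show C3 = C3 * 1 by ring]
    exact mul_le_mul_of_nonneg_left hE1 hC30.le
  calc (2 * CI) ^ (1 / μ) * G K ^ ((μ + 1) / μ) * ε ^ (-(1 / μ)) +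
        ∑ k ∈ range (K + 1), F k * η ((k : ℤ) - 1)
      ≤ C1 * ε ^ (-(1/μ)) + (C2 * ε ^ (-(1/μ)) + C3) := add_le_add hT1 hT2
    _ ≤ (C1 + C2 + C3) * ε ^ (-(1/μ)) := by linarith
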